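/- The forgetful functor U : Ab◁Set → Ab is cocontinuous but has no left adjoint and no right adjoint. -/

import Mathlib

open CategoryTheory Limits

universe v u

/-- An object of the set-decorated category `C ◁ Set`: a triple `(c, S, f)` with `c` an
object of `C`, `S` a set, and `f : S → End c`, encoded as a function `ZFSet → End c`
vanishing outside `S` (the paper's convention that `f` evaluates to `0` outside `S`). -/
structure DecObj (C : Type u) [Category.{v} C] [Preadditive C] : Type (max u v 2) where
  c : C
  S : ZFSet.{0}
  f : ZFSet.{0} → (c ⟶ c)
  hf : ∀ s : ZFSet.{0}, s ∉ S → f s = 0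

namespace DecObj

variable {C : Type u} [Category.{v} C] [Preadditive C]

/-- `ψ : c ⟶ c'` intertwines the decorations of `X` and `Y`; by the vanishing-outside-`S`
convention this is exactly the three-case condition of the paper. -/
def Intertwines (X Y : DecObj C) (ψ : X.c ⟶ Y.c) : Prop :=
  ∀ s : ZFSet.{0}, X.f s ≫ ψ = ψ ≫ Y.f s

/-- Morphisms in `C ◁ Set`. -/
@[ext]
structure Hom (X Y : DecObj C) where
  ψ : X.c ⟶ Y.c
  comm : Intertwines X Y ψ

instance : Category (DecObj C) where
  Hom := Hom
  id X := ⟨𝟙 X.c, fun s => by simp [Intertwines]⟩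
  comp g h := ⟨g.ψ ≫ h.ψ, fun s => by
    rw [← Category.assoc, g.comm s, Category.assoc, h.comm s, Category.assoc]⟩

@[simp] theorem id_ψ (X : DecObj C) : Hom.ψ (𝟙 X) = 𝟙 X.c := rfl

@[simp] theorem comp_ψ {X Y Z : DecObj C} (g : X ⟶ Y) (h : Y ⟶ Z) :
    (g ≫ h).ψ = g.ψ ≫ h.ψ := rfl

/-- The forgetful functor `U : C ◁ Set ⥤ C`. -/
def forgetDec (C : Type u) [Category.{v} C] [Preadditive C] : DecObj C ⥤ C where
  obj X := X.c
  map g := g.ψ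

end DecObj


namespace ForgetDecAux

open DecObj

noncomputable section

variable {J : Type} [SmallCategory J] (K : J ⥤ DecObj AddCommGrpCat.{0})

/-- The pointwise decoration as a natural endomorphism of the underlying diagram. -/
def theta (s : ZFSet.{0}) : K ⋙ forgetDec AddCommGrpCat.{0} ⟶ K ⋙ forgetDec AddCommGrpCat.{0} where
  app j := (K.obj j).f s
  naturality _ _ α := ((K.map α).comm s).symm

def bigS : ZFSet.{0} := ZFSet.sUnion (ZFSet.range fun j : J => (K.obj j).S)

lemma S_sub (j : J) {s : ZFSet.{0}} (hs : s ∈ (K.obj j).S) : s ∈ bigS K :=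
  ZFSet.mem_sUnion.2 ⟨(K.obj j).S, ZFSet.mem_range.2 ⟨j, rfl⟩, hs⟩

def apex : DecObj AddCommGrpCat.{0} where
  c := colimit (K ⋙ forgetDec AddCommGrpCat.{0})
  S := bigS K
  f s := colimMap (theta K s)
  hf s hs := by
    apply colimit.hom_ext
    intro j
    rw [ι_colimMap, comp_zero]
    have h0 : (K.obj j).f s = 0 := (K.obj j).hf s (fun h => hs (S_sub K j h))
    show (K.obj j).f s ≫ _ = 0
    rw [h0]
    exact zero_comp

def myCocone : Cocone K where
  pt := apex K
  ι :=
    { app := fun j =>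
        ⟨colimit.ι (K ⋙ forgetDec AddCommGrpCat.{0}) j,
          fun s => (ι_colimMap (theta K s) j).symm⟩
      naturality := fun j j' α => by
        apply DecObj.Hom.ext
        simp only [comp_ψ, Functor.const_obj_map, Category.comp_id]
        show (K ⋙ forgetDec AddCommGrpCat.{0}).map α ≫ _ = _
        erw [colimit.w]
        rfl }

def myIsColimit : IsColimit (myCocone K) where
  desc s :=
    ⟨colimit.desc (K ⋙ forgetDec AddCommGrpCat.{0}) ((forgetDec AddCommGrpCat.{0}).mapCocone s),
      fun r => by
        apply colimit.hom_ext
        intro j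
        dsimp only [myCocone, apex]
        erw [← Category.assoc, ι_colimMap, Category.assoc, colimit.ι_desc, ← Category.assoc,
          colimit.ι_desc]
        exact (s.ι.app j).comm r⟩
  fac s j := by
    apply DecObj.Hom.ext
    simp only [comp_ψ]
    exact colimit.ι_desc ((forgetDec AddCommGrpCat.{0}).mapCocone s) j
  uniq s m hm := by
    apply DecObj.Hom.ext
    apply colimit.hom_ext
    intro j
    erw [colimit.ι_desc]
    exact congrArg DecObj.Hom.ψ (hm j)

def mapIsColimit : IsColimit ((forgetDec AddCommGrpCat.{0}).mapCocone (myCocone K)) :=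
  (colimit.isColimit (K ⋙ forgetDec AddCommGrpCat.{0})).ofIsoColimit
    (Cocones.ext (Iso.refl _) (fun j => by simp)).symm

end

lemma id_ne_zero : (𝟙 (AddCommGrpCat.of ℤ) : AddCommGrpCat.of ℤ ⟶ AddCommGrpCat.of ℤ) ≠ 0 := fun h =>
  one_ne_zero (α := ℤ) (congrArg (fun g => g (1 : ℤ)) h)

open scoped Classical in
/-- The test object `(ℤ, {s₀}, s₀ ↦ id)`. -/
noncomputable def testObj (s₀ : ZFSet.{0}) : DecObj AddCommGrpCat.{0} where
  c := AddCommGrpCat.of ℤ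
  S := {s₀}
  f s := if s = s₀ then 𝟙 _ else 0
  hf s hs := if_neg (by simpa using hs)

@[simp] lemma testObj_f_self (s₀ : ZFSet.{0}) : (testObj s₀).f s₀ = 𝟙 _ := by simp [testObj]

end ForgetDecAux


open ForgetDecAux in
/-- the forgetful functor `U : Ab ◁ Set ⥤ Ab` is cocontinuous but has
neither a left adjoint nor a right adjoint. -/
theorem forgetDec_Ab_cocontinuous_no_adjoints :
    PreservesColimits (DecObj.forgetDec AddCommGrpCat.{0}) ∧
    ¬ (DecObj.forgetDec AddCommGrpCat.{0}).IsRightAdjoint ∧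
    ¬ (DecObj.forgetDec AddCommGrpCat.{0}).IsLeftAdjoint := by
  refine ⟨?_, ?_, ?_⟩
  · exact
      { preservesColimitsOfShape := fun {J} _ =>
          { preservesColimit := fun {K} =>
              preservesColimit_of_preserves_colimit_cocone (myIsColimit K) (mapIsColimit K) } }
  · intro h
    obtain ⟨L, ⟨adj⟩⟩ := h.exists_leftAdjoint
    have key : ∀ s₀ : ZFSet.{0}, s₀ ∈ (L.obj (AddCommGrpCat.of ℤ)).S := by
      intro s₀
      set Y := testObj s₀ with hY
      let φ : L.obj (AddCommGrpCat.of ℤ) ⟶ Y :=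
        (adj.homEquiv (AddCommGrpCat.of ℤ) Y).symm (𝟙 (AddCommGrpCat.of ℤ))
      have hφ : adj.unit.app (AddCommGrpCat.of ℤ) ≫ φ.ψ = 𝟙 (AddCommGrpCat.of ℤ) := by
        have h1 := (adj.homEquiv (AddCommGrpCat.of ℤ) Y).apply_symm_apply (𝟙 (AddCommGrpCat.of ℤ))
        rwa [adj.homEquiv_unit] at h1
      have hψ : φ.ψ ≠ 0 := by
        intro h0
        apply id_ne_zero
        rw [← hφ, h0]
        exact comp_zero
      by_contra hs
      have h0 : (L.obj (AddCommGrpCat.of ℤ)).f s₀ = 0 := (L.obj (AddCommGrpCat.of ℤ)).hf s₀ hs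
      have hc := φ.comm s₀
      rw [h0, zero_comp, testObj_f_self, Category.comp_id] at hc
      exact hψ hc.symm
    exact ZFSet.mem_irrefl _ (key (L.obj (AddCommGrpCat.of ℤ)).S)
  · intro h
    obtain ⟨R, ⟨adj⟩⟩ := h.exists_rightAdjoint
    have key : ∀ s₀ : ZFSet.{0}, s₀ ∈ (R.obj (AddCommGrpCat.of ℤ)).S := by
      intro s₀
      set Y := testObj s₀ with hY
      let φ : Y ⟶ R.obj (AddCommGrpCat.of ℤ) :=
        adj.homEquiv Y (AddCommGrpCat.of ℤ) (𝟙 (AddCommGrpCat.of ℤ))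
      have hφ : φ.ψ ≫ adj.counit.app (AddCommGrpCat.of ℤ) = 𝟙 (AddCommGrpCat.of ℤ) := by
        have h1 := (adj.homEquiv Y (AddCommGrpCat.of ℤ)).symm_apply_apply (𝟙 (AddCommGrpCat.of ℤ))
        rwa [adj.homEquiv_counit] at h1
      have hψ : φ.ψ ≠ 0 := by
        intro h0
        apply id_ne_zero
        rw [← hφ, h0]
        exact zero_comp
      by_contra hs
      have h0 : (R.obj (AddCommGrpCat.of ℤ)).f s₀ = 0 := (R.obj (AddCommGrpCat.of ℤ)).hf s₀ hs
      have hc := φ.comm s₀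
      rw [h0, comp_zero, testObj_f_self, Category.id_comp] at hc
      exact hψ hc
    exact ZFSet.mem_irrefl _ (key (R.obj (AddCommGrpCat.of ℤ)).S)
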